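/- (Bou-Rabee–McReynolds) The divisibility function of the free group is not dominated by log: for every constant C > 0 there exist an integer n and a nontrivial word w ∈ F_k with word length |w| ≤ n such that every subgroup H ≤ F_k of index at most C·log(C·n) contains w. (That is, max_{|w| ≤ n} D_{F_k}(w) ⋠ log n.) -/

import Mathlib

set_option linter.unusedSectionVars false
set_option maxHeartbeats 1000000

namespace BRM

open FreeGroup List

variable {α : Type*} [DecidableEq α]

open FreeGroup List
variable {α : Type*} [DecidableEq α]
def ok : (α × Bool) → (α × Bool) → Prop := fun p q => p.1 = q.1 → p.2 = q.2

def leafL (a b : α) (e : ℕ) : List (α × Bool) :=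
  replicate e (a, true) ++ [(b, true)] ++ replicate e (a, true) ++ [(b, false)] ++
  replicate e (a, false) ++ [(b, true)] ++ replicate e (a, false) ++ [(b, false)]

def nodeL (a b : α) (L M : List (α × Bool)) : List (α × Bool) :=
  [(a, true)] ++ L ++ [(a, false), (b, true)] ++ M ++ [(b, false), (a, true)] ++
  FreeGroup.invRev L ++ [(a, false), (b, true)] ++ FreeGroup.invRev M ++ [(b, false)]

lemma chain_append_of {l₁ l₂ : List (α × Bool)} {x y : α × Bool} (h₁ : List.Chain' ok l₁)
    (h₂ : List.Chain' ok l₂) (hx : l₁.getLast? = some x) (hy : l₂.head? = some y)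
    (hxy : ok x y) : List.Chain' ok (l₁ ++ l₂) := by
  refine List.isChain_append.mpr ⟨h₁, h₂, ?_⟩
  intro p hp q hq
  rw [hx, Option.mem_some_iff] at hp
  rw [hy, Option.mem_some_iff] at hq
  subst hp; subst hq; exact hxy

lemma chain_cons_of {x : α × Bool} {l : List (α × Bool)} {y : α × Bool}
    (h : List.Chain' ok l) (hy : l.head? = some y) (hxy : ok x y) :
    List.Chain' ok (x :: l) := by
  refine List.isChain_cons.mpr ⟨?_, h⟩
  intro q hq; rw [hy, Option.mem_some_iff] at hq; subst hq; exact hxy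

lemma head?_replicate_cons (x y : α × Bool) (l : List (α × Bool)) (e : ℕ) :
    (replicate e x ++ y :: l).head? = some (if 0 < e then x else y) := by
  cases e <;> simp [List.replicate_succ]

lemma chain_replicate_cons (x y : α × Bool) (l : List (α × Bool)) (e : ℕ)
    (h : List.Chain' ok (y :: l)) (hxy : ok x y) (hxx : ok x x) :
    List.Chain' ok (replicate e x ++ y :: l) := by
  induction e with
  | zero => simpa using h
  | succ e ih =>
    rw [List.replicate_succ, List.cons_append]
    refine chain_cons_of ih (head?_replicate_cons x y l e) ?_
    split_ifs
    · exact hxx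
    · exact hxy

lemma getLast?_append_of {β : Type*} {l₂ : List β} {x : β} (h : l₂.getLast? = some x)
    (l₁ : List β) : (l₁ ++ l₂).getLast? = some x := by
  rw [List.getLast?_append_of_ne_nil]
  · exact h
  · rintro rfl; simp at h

lemma getLast?_cons_of {β : Type*} {l : List β} {x : β} (h : l.getLast? = some x) (y : β) :
    (y :: l).getLast? = some x :=
  getLast?_append_of h [y]

lemma reduce_chain : ∀ L : List (α × Bool), List.Chain' (ok) L → FreeGroup.reduce L = L := by
  intro L h
  induction L with
  | nil => rfl
  | cons x L ih =>
    rw [FreeGroup.reduce.cons, ih h.tail]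
    cases L with
    | nil => rfl
    | cons y L' =>
      have hxy : ok x y := (List.isChain_cons_cons.mp h).1
      simp only
      rw [if_neg]
      rintro ⟨h1, h2⟩
      have := hxy h1
      simp [this] at h2

def Inv (a b : α) (L : List (α × Bool)) : Prop :=
  List.Chain' ok L ∧ L.head? = some (a, true) ∧ L.getLast? = some (b, false)

lemma okrefl (x : α × Bool) : ok x x := fun _ => rfl
lemma okne {a b : α} (hab : a ≠ b) (s t : Bool) : ok (a, s) (b, t) := fun h => absurd h hab

lemma inv_leafL {a b : α} (hab : a ≠ b) {e : ℕ} (he : 1 ≤ e) : Inv a b (leafL a b e) := by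
  obtain ⟨e, rfl⟩ : ∃ e', e = e' + 1 := ⟨e - 1, by omega⟩
  set R1 : List (α × Bool) := replicate (e+1) (a, false) ++ [(b, false)] with hR1
  set l3 : List (α × Bool) := (b, true) :: R1 with hl3
  set l2 : List (α × Bool) := replicate (e+1) (a, false) ++ l3 with hl2
  set l1 : List (α × Bool) := (b, false) :: l2 with hl1
  set l0 : List (α × Bool) := replicate (e+1) (a, true) ++ l1 with hl0
  set lb : List (α × Bool) := (b, true) :: l0 with hlb
  set la : List (α × Bool) := replicate (e+1) (a, true) ++ lb with hla
  have hL : leafL a b (e + 1) = la := by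
    rw [hla, hlb, hl0, hl1, hl2, hl3, hR1]; simp [leafL]
  rw [hL]
  have hba := okne hab.symm
  have hab' := okne hab
  have c4 : List.Chain' ok R1 := by
    rw [hR1, show [((b:α), false)] = (b, false) :: ([] : List (α × Bool)) from rfl]
    exact chain_replicate_cons _ _ _ _ (List.isChain_singleton _) (hab' _ _) (okrefl _)
  have h4 : R1.head? = some (a, false) := by
    rw [hR1, show [((b:α), false)] = (b, false) :: ([] : List (α × Bool)) from rfl,
      head?_replicate_cons]; simp
  have c3 : List.Chain' ok l3 := chain_cons_of c4 h4 (hba _ _)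
  have c2 : List.Chain' ok l2 := by
    rw [hl2, hl3]; exact chain_replicate_cons _ _ _ _ (hl3 ▸ c3) (hab' _ _) (okrefl _)
  have h2 : l2.head? = some (a, false) := by rw [hl2, hl3, head?_replicate_cons]; simp
  have c1 : List.Chain' ok l1 := chain_cons_of c2 h2 (hba _ _)
  have c0 : List.Chain' ok l0 := by
    rw [hl0, hl1]; exact chain_replicate_cons _ _ _ _ (hl1 ▸ c1) (hab' _ _) (okrefl _)
  have h0 : l0.head? = some (a, true) := by rw [hl0, hl1, head?_replicate_cons]; simp
  have cb : List.Chain' ok lb := chain_cons_of c0 h0 (hba _ _)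
  have ca : List.Chain' ok la := by
    rw [hla, hlb]; exact chain_replicate_cons _ _ _ _ (hlb ▸ cb) (hab' _ _) (okrefl _)
  refine ⟨ca, ?_, ?_⟩
  · rw [hla, hlb, head?_replicate_cons]; simp
  · rw [hla, hlb, hl0, hl1, hl2, hl3, hR1]
    refine getLast?_append_of (getLast?_cons_of (getLast?_append_of (getLast?_cons_of
      (getLast?_append_of (getLast?_cons_of (getLast?_append_of ?_ _) _) _) _) _) _) _
    rfl

lemma head?_append_of {β : Type*} {l₁ l₂ : List β} {x : β} (h : l₁.head? = some x) :
    (l₁ ++ l₂).head? = some x := by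
  cases l₁ <;> simp_all

lemma chain_invRev {L : List (α × Bool)} (h : List.Chain' (ok) L) :
    List.Chain' (ok) (FreeGroup.invRev L) := by
  unfold List.Chain' at h ⊢
  rw [FreeGroup.invRev, List.isChain_reverse, List.isChain_map]
  exact h.imp (fun p q hpq h1 => by
    have : p.1 = q.1 := h1.symm
    simp [hpq this])

lemma invRev_head? {L : List (α × Bool)} {p : α × Bool} (h : L.getLast? = some p) :
    (FreeGroup.invRev L).head? = some (p.1, !p.2) := by
  rw [FreeGroup.invRev, List.head?_reverse, List.getLast?_map, h]; rfl

lemma invRev_getLast? {L : List (α × Bool)} {p : α × Bool} (h : L.head? = some p) :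
    (FreeGroup.invRev L).getLast? = some (p.1, !p.2) := by
  rw [FreeGroup.invRev, List.getLast?_reverse, List.head?_map, h]; rfl

lemma inv_nodeL {a b : α} (hab : a ≠ b) {L M : List (α × Bool)}
    (hL : Inv a b L) (hM : Inv a b M) : Inv a b (nodeL a b L M) := by
  obtain ⟨cL, hLh, hLl⟩ := hL
  obtain ⟨cM, hMh, hMl⟩ := hM
  have hba := okne hab.symm
  have hab' := okne hab
  have iLh : (FreeGroup.invRev L).head? = some (b, true) := invRev_head? hLl
  have iLl : (FreeGroup.invRev L).getLast? = some (a, false) := invRev_getLast? hLh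
  have iMh : (FreeGroup.invRev M).head? = some (b, true) := invRev_head? hMl
  have iMl : (FreeGroup.invRev M).getLast? = some (a, false) := invRev_getLast? hMh
  set m1 : List (α × Bool) := FreeGroup.invRev M ++ [(b, false)] with hm1
  set m2 : List (α × Bool) := (b, true) :: m1 with hm2
  set m3 : List (α × Bool) := (a, false) :: m2 with hm3
  set m4 : List (α × Bool) := FreeGroup.invRev L ++ m3 with hm4
  set m5 : List (α × Bool) := (a, true) :: m4 with hm5
  set m6 : List (α × Bool) := (b, false) :: m5 with hm6
  set m7 : List (α × Bool) := M ++ m6 with hm7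
  set m8 : List (α × Bool) := (b, true) :: m7 with hm8
  set m9 : List (α × Bool) := (a, false) :: m8 with hm9
  set m10 : List (α × Bool) := L ++ m9 with hm10
  set m11 : List (α × Bool) := (a, true) :: m10 with hm11
  have hnode : nodeL a b L M = m11 := by
    rw [hm11, hm10, hm9, hm8, hm7, hm6, hm5, hm4, hm3, hm2, hm1]; simp [nodeL]
  rw [hnode]
  have c1 : List.Chain' ok m1 := chain_append_of (chain_invRev cM) (List.isChain_singleton _)
    iMl (by rfl) (hab' _ _)
  have h1 : m1.head? = some (b, true) := head?_append_of iMh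
  have c2 : List.Chain' ok m2 := chain_cons_of c1 h1 (okrefl _)
  have c3 : List.Chain' ok m3 := chain_cons_of c2 rfl (hab' _ _)
  have c4 : List.Chain' ok m4 := chain_append_of (chain_invRev cL) c3 iLl rfl (okrefl _)
  have h4 : m4.head? = some (b, true) := head?_append_of iLh
  have c5 : List.Chain' ok m5 := chain_cons_of c4 h4 (hab' _ _)
  have c6 : List.Chain' ok m6 := chain_cons_of c5 rfl (hba _ _)
  have c7 : List.Chain' ok m7 := chain_append_of cM c6 hMl rfl (okrefl _)
  have h7 : m7.head? = some (a, true) := head?_append_of hMh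
  have c8 : List.Chain' ok m8 := chain_cons_of c7 h7 (hba _ _)
  have c9 : List.Chain' ok m9 := chain_cons_of c8 rfl (hab' _ _)
  have c10 : List.Chain' ok m10 := chain_append_of cL c9 hLl rfl (hba _ _)
  have h10 : m10.head? = some (a, true) := head?_append_of hLh
  have c11 : List.Chain' ok m11 := chain_cons_of c10 h10 (okrefl _)
  refine ⟨c11, rfl, ?_⟩
  rw [hm11, hm10, hm9, hm8, hm7, hm6, hm5, hm4, hm3, hm2, hm1]
  refine getLast?_cons_of (getLast?_append_of (getLast?_cons_of (getLast?_cons_of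
    (getLast?_append_of (getLast?_cons_of (getLast?_cons_of (getLast?_append_of
    (getLast?_cons_of (getLast?_cons_of (getLast?_append_of ?_ _) _) _) _) _) _) _) _) _) _) _
  rfl

def WL (a b : α) : ℕ → ℕ → List (α × Bool)
  | 0, lo => leafL a b lo
  | (d+1), lo => nodeL a b (WL a b d lo) (WL a b d (lo + 2 ^ d))

lemma inv_WL {a b : α} (hab : a ≠ b) : ∀ (d lo : ℕ), 1 ≤ lo → Inv a b (WL a b d lo)
  | 0, lo, hlo => inv_leafL hab hlo
  | (d+1), lo, hlo =>
    inv_nodeL hab (inv_WL hab d lo hlo) (inv_WL hab d (lo + 2 ^ d) (le_trans hlo (Nat.le_add_right _ _)))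

lemma len_leafL (a b : α) (e : ℕ) : (leafL a b e).length = 4 * e + 4 := by
  simp [leafL]; omega

lemma len_nodeL (a b : α) (L M : List (α × Bool)) :
    (nodeL a b L M).length = 2 * L.length + 2 * M.length + 8 := by
  simp [nodeL, FreeGroup.invRev]; omega

lemma len_WL (a b : α) : ∀ (d lo : ℕ), (WL a b d lo).length ≤ 4 ^ d * (4 * (lo + 2 ^ d) + 8)
  | 0, lo => by rw [WL, len_leafL]; simp; omega
  | (d+1), lo => by
    rw [WL, len_nodeL]
    have h1 := len_WL a b d lo
    have h2 := len_WL a b d (lo + 2 ^ d)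
    have e1 : 4 ^ (d+1) = 4 * 4 ^ d := by ring
    have e2 : 2 ^ (d+1) = 2 ^ d + 2 ^ d := by ring
    have p1 : 1 ≤ 2 ^ d := Nat.one_le_two_pow
    have p2 : 1 ≤ 4 ^ d := Nat.one_le_pow _ _ (by norm_num)
    nlinarith [h1, h2]



open FreeGroup List

variable {α : Type*} [DecidableEq α]

lemma mk_replicate_true (a : α) (e : ℕ) :
    FreeGroup.mk (replicate e (a, true)) = FreeGroup.of a ^ e := by
  rw [← toWord_of_pow, mk_toWord]

lemma invRev_replicate (a : α) (t : Bool) (e : ℕ) :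
    FreeGroup.invRev (replicate e (a, t)) = replicate e (a, !t) := by
  simp [FreeGroup.invRev]

lemma mk_replicate_false (a : α) (e : ℕ) :
    FreeGroup.mk (replicate e (a, false)) = (FreeGroup.of a ^ e)⁻¹ := by
  rw [← mk_replicate_true, inv_mk, invRev_replicate]; simp

lemma mk_single_false (a : α) : FreeGroup.mk [(a, false)] = (FreeGroup.of a)⁻¹ := by
  simpa using mk_replicate_false a 1

lemma mk_single_true (a : α) : FreeGroup.mk [(a, true)] = FreeGroup.of a := rfl

lemma mk_leafL (a b : α) (e : ℕ) :
    FreeGroup.mk (leafL a b e) =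
      FreeGroup.of a ^ e * FreeGroup.of b * FreeGroup.of a ^ e * (FreeGroup.of b)⁻¹ *
      (FreeGroup.of a ^ e)⁻¹ * FreeGroup.of b * (FreeGroup.of a ^ e)⁻¹ * (FreeGroup.of b)⁻¹ := by
  simp only [leafL, ← FreeGroup.mul_mk, mk_replicate_true, mk_replicate_false,
    mk_single_true, mk_single_false]

lemma mk_pair (a b : α) : FreeGroup.mk [(a, false), (b, true)] =
    (FreeGroup.of a)⁻¹ * FreeGroup.of b := by
  rw [show [(a, false), (b, true)] = [(a, false)] ++ [(b, true)] from rfl,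
    ← FreeGroup.mul_mk, mk_single_false, mk_single_true]

lemma mk_pair' (a b : α) : FreeGroup.mk [(a, false), (b, true)] =
    (FreeGroup.of a)⁻¹ * FreeGroup.of b := mk_pair a b

lemma mk_nodeL (a b : α) (L M : List (α × Bool)) :
    FreeGroup.mk (nodeL a b L M) =
      FreeGroup.of a * FreeGroup.mk L * (FreeGroup.of a)⁻¹ * FreeGroup.of b *
      FreeGroup.mk M * (FreeGroup.of b)⁻¹ * FreeGroup.of a * (FreeGroup.mk L)⁻¹ *
      (FreeGroup.of a)⁻¹ * FreeGroup.of b * (FreeGroup.mk M)⁻¹ * (FreeGroup.of b)⁻¹ := by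
  rw [show nodeL a b L M = [(a, true)] ++ L ++ [(a, false)] ++ [(b, true)] ++ M ++ [(b, false)]
      ++ [(a, true)] ++ FreeGroup.invRev L ++ [(a, false)] ++ [(b, true)] ++ FreeGroup.invRev M
      ++ [(b, false)] by simp [nodeL]]
  simp only [← FreeGroup.mul_mk, mk_single_true, mk_single_false, ← FreeGroup.inv_mk]

section eval
variable {G : Type*} [Group G] (f : FreeGroup α →* G) (a b : α)

lemma eval_leaf {e : ℕ} (h : f (FreeGroup.of a) ^ e = 1) :
    f (FreeGroup.mk (leafL a b e)) = 1 := by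
  rw [mk_leafL]
  simp only [_root_.map_mul, _root_.map_inv, _root_.map_pow, h]
  group

lemma eval_node {L M : List (α × Bool)}
    (h : f (FreeGroup.mk L) = 1 ∨ f (FreeGroup.mk M) = 1) :
    f (FreeGroup.mk (nodeL a b L M)) = 1 := by
  rw [mk_nodeL]
  simp only [_root_.map_mul, _root_.map_inv]
  rcases h with h | h <;> rw [h] <;> group

lemma eval_WL : ∀ (d lo e : ℕ), lo ≤ e → e < lo + 2 ^ d → f (FreeGroup.of a) ^ e = 1 →
    f (FreeGroup.mk (WL a b d lo)) = 1
  | 0, lo, e, h1, h2, h3 => by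
    have : e = lo := by simpa using Nat.le_antisymm (by omega) h1
    exact eval_leaf f a b (this ▸ h3)
  | (d+1), lo, e, h1, h2, h3 => by
    rcases lt_or_ge e (lo + 2 ^ d) with h | h
    · exact eval_node f a b (Or.inl (eval_WL d lo e h1 h h3))
    · refine eval_node f a b (Or.inr (eval_WL d (lo + 2 ^ d) e h ?_ h3))
      have : 2 ^ (d + 1) = 2 ^ d + 2 ^ d := by ring
      omega

end eval


lemma card_sq_le_two_sum : ∀ (n : ℕ) (S : Finset ℕ), S.card = n → (∀ x ∈ S, 2 ≤ x) →
    S.card * S.card ≤ 2 * ∑ x ∈ S, x := by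
  intro n
  induction n with
  | zero => intro S hS _; simp [Finset.card_eq_zero.mp hS]
  | succ n ih =>
    intro S hS h2
    have hne : S.Nonempty := Finset.card_pos.mp (by omega)
    set M := S.max' hne with hM
    have hMem : M ∈ S := S.max'_mem hne
    have hsub : S ⊆ Finset.Icc 2 M := by
      intro x hx
      exact Finset.mem_Icc.mpr ⟨h2 x hx, S.le_max' x hx⟩
    have hcard : S.card ≤ M - 1 := by
      have := Finset.card_le_card hsub
      simpa [Nat.card_Icc] using this
    have hM2 : 2 ≤ M := h2 M hMem
    have hS' : (S.erase M).card = n := by rw [Finset.card_erase_of_mem hMem, hS]; omega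
    have h2' : ∀ x ∈ S.erase M, 2 ≤ x := fun x hx => h2 x (Finset.mem_of_mem_erase hx)
    have IH := ih (S.erase M) hS' h2'
    have hsum : M + ∑ x ∈ S.erase M, x = ∑ x ∈ S, x := Finset.add_sum_erase S (fun x => x) hMem
    rw [hS'] at IH
    rw [hS]
    have hexp : (n+1) * (n+1) = n * n + 2 * n + 1 := by ring
    omega

lemma perm_order_le {β : Type*} [Fintype β] [DecidableEq β] (σ : Equiv.Perm β) (m : ℕ)
    (hm : Fintype.card β ≤ m) (hm1 : 1 ≤ m) : orderOf σ ≤ m ^ Nat.sqrt (2 * m) := by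
  classical
  rw [← Equiv.Perm.lcm_cycleType]
  set S : Finset ℕ := σ.cycleType.toFinset with hS
  have h2 : ∀ x ∈ S, 2 ≤ x := fun x hx =>
    Equiv.Perm.two_le_of_mem_cycleType (Multiset.mem_toFinset.mp hx)
  have hlcm : σ.cycleType.lcm = S.lcm id := by
    rw [Finset.lcm_def, Multiset.map_id, hS, Multiset.toFinset_val, Multiset.lcm_dedup]
  have hsum_le : ∑ x ∈ S, x ≤ m := by
    have hd : σ.cycleType.dedup ≤ σ.cycleType := σ.cycleType.dedup_le
    obtain ⟨t, ht⟩ := Multiset.le_iff_exists_add.mp hd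
    have heq : σ.cycleType.sum = (σ.cycleType.dedup + t).sum := congrArg Multiset.sum ht
    rw [Multiset.sum_add] at heq
    have hsum : σ.cycleType.sum ≤ m := by
      rw [Equiv.Perm.sum_cycleType]
      exact le_trans (Finset.card_le_univ _) hm
    have hd2 : σ.cycleType.dedup.sum ≤ m := by omega
    have : ∑ x ∈ S, x = σ.cycleType.dedup.sum := by
      rw [hS, Finset.sum]; simp
    omega
  have hcard : S.card ≤ Nat.sqrt (2 * m) := by
    rw [Nat.le_sqrt]
    have := card_sq_le_two_sum S.card S rfl h2
    omega
  have hdvd : S.lcm id ∣ ∏ x ∈ S, x := Finset.lcm_dvd (fun b hb => Finset.dvd_prod_of_mem id hb)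
  have hpos : 0 < ∏ x ∈ S, x := Finset.prod_pos (fun x hx => by have := h2 x hx; omega)
  have hprod : ∏ x ∈ S, x ≤ m ^ S.card := by
    apply Finset.prod_le_pow_card
    intro x hx
    calc x ≤ ∑ y ∈ S, y := Finset.single_le_sum (f := id) (fun y _ => Nat.zero_le y) hx
    _ ≤ m := hsum_le
  calc σ.cycleType.lcm = S.lcm id := hlcm
    _ ≤ ∏ x ∈ S, x := Nat.le_of_dvd hpos hdvd
    _ ≤ m ^ S.card := hprod
    _ ≤ m ^ Nat.sqrt (2 * m) := Nat.pow_le_pow_right hm1 hcard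


end BRM

open BRM in
/-- (Bou-Rabee–McReynolds) The divisibility function of the free group `F_k` (`k ≥ 2`)
is not dominated by `log`: for every `C > 0` there are `n` and a nontrivial word `w`
of length at most `n` such that every subgroup of (finite) index at most `C·log(C·n)`
contains `w`. -/
theorem stmt_15 (k : ℕ) (hk : 2 ≤ k) :
    ∀ C : ℝ, 0 < C →
      ∃ (n : ℕ) (w : FreeGroup (Fin k)), w ≠ 1 ∧
        (FreeGroup.toWord w).length ≤ n ∧
        ∀ H : Subgroup (FreeGroup (Fin k)),
          H.index ≠ 0 → (H.index : ℝ) ≤ C * Real.log (C * n) → w ∈ H := by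
  intro C hC
  classical
  -- the two generators
  set a : Fin k := ⟨0, by omega⟩ with ha
  set b : Fin k := ⟨1, by omega⟩ with hb
  have hab : a ≠ b := by simp [ha, hb, Fin.ext_iff]
  -- choose the parameter t
  obtain ⟨t0, ht0⟩ := exists_nat_ge (C * |Real.log C| + 4 * C + 36 * C + 1)
  obtain ⟨t, ht1, ht⟩ : ∃ t : ℕ, 1 ≤ t ∧ C * |Real.log C| + 4 * C + 36 * C + 1 ≤ (t : ℝ) := by
    refine ⟨max t0 1, le_max_right _ _, le_trans ht0 ?_⟩
    exact_mod_cast Nat.cast_le.mpr (le_max_left t0 1)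
  obtain ⟨m, hm⟩ : ∃ m : ℕ, m = t ^ 4 := ⟨_, rfl⟩
  have hm1 : 1 ≤ m := by rw [hm]; exact Nat.one_le_pow _ _ (by omega)
  obtain ⟨s, hs⟩ : ∃ s : ℕ, s = Nat.sqrt (2 * m) := ⟨_, rfl⟩
  obtain ⟨l, hl⟩ : ∃ l : ℕ, l = Nat.log 2 m + 1 := ⟨_, rfl⟩
  obtain ⟨D, hD⟩ : ∃ D : ℕ, D = (s + 1) * l := ⟨_, rfl⟩
  obtain ⟨w, hw⟩ : ∃ w : FreeGroup (Fin k), w = FreeGroup.mk (BRM.WL a b D 1) := ⟨_, rfl⟩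
  obtain ⟨n, hn⟩ : ∃ n : ℕ, n = 16 * 8 ^ D := ⟨_, rfl⟩
  -- key inequalities on naturals
  have hsle : s ≤ 2 * t ^ 2 := by
    rw [hs, hm]
    calc Nat.sqrt (2 * t ^ 4) ≤ Nat.sqrt ((2 * t ^ 2) ^ 2) := by
          apply Nat.sqrt_le_sqrt; nlinarith [Nat.one_le_pow 4 t (show 0 < t by omega)]
      _ = 2 * t ^ 2 := Nat.sqrt_eq' _
  have hlle : l ≤ 4 * t := by
    rw [hl]
    have h1 : m < 2 ^ (4 * t) := by
      rw [hm]
      calc t ^ 4 < (2 ^ t) ^ 4 := Nat.pow_lt_pow_left (Nat.lt_two_pow_self (n := t)) (by norm_num)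
        _ = 2 ^ (4 * t) := by rw [← pow_mul, mul_comm]
    have := Nat.log_lt_of_lt_pow (show m ≠ 0 by omega) h1
    omega
  have hDle : D ≤ 12 * t ^ 3 := by
    rw [hD]
    calc (s + 1) * l ≤ (2 * t ^ 2 + 1) * (4 * t) := Nat.mul_le_mul (by omega) hlle
      _ ≤ (3 * t ^ 2) * (4 * t) := by
          have : 1 ≤ t ^ 2 := Nat.one_le_pow _ _ (by omega)
          apply Nat.mul_le_mul_right; omega
      _ = 12 * t ^ 3 := by ring
  have hmpow : m ^ s ≤ 2 ^ D := by
    have h2l : m < 2 ^ l := by rw [hl]; exact Nat.lt_pow_succ_log_self (by norm_num) m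
    calc m ^ s ≤ m ^ (s + 1) := Nat.pow_le_pow_right hm1 (by omega)
      _ ≤ (2 ^ l) ^ (s + 1) := Nat.pow_le_pow_left (le_of_lt h2l) _
      _ = 2 ^ D := by rw [← pow_mul, hD, mul_comm]
  -- the word is reduced and nontrivial
  have hInv : BRM.Inv a b (BRM.WL a b D 1) := BRM.inv_WL hab D 1 le_rfl
  have htoWord : FreeGroup.toWord w = BRM.WL a b D 1 := by
    rw [hw, FreeGroup.toWord_mk, BRM.reduce_chain _ hInv.1]
  have hwne : w ≠ 1 := by
    intro h
    rw [h, FreeGroup.toWord_one] at htoWord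
    have := hInv.2.1
    rw [← htoWord] at this
    simp at this
  -- length bound
  have hlen : (FreeGroup.toWord w).length ≤ n := by
    rw [htoWord, hn]
    calc (BRM.WL a b D 1).length ≤ 4 ^ D * (4 * (1 + 2 ^ D) + 8) := BRM.len_WL a b D 1
      _ ≤ 4 ^ D * (16 * 2 ^ D) := by
          apply Nat.mul_le_mul_left
          have : 1 ≤ 2 ^ D := Nat.one_le_two_pow
          omega
      _ = 16 * 8 ^ D := by rw [show (8:ℕ) = 4 * 2 by norm_num, Nat.mul_pow]; ring
  refine ⟨n, w, hwne, hlen, ?_⟩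
  intro H hidx hle
  -- numeric: C * log (C * n) ≤ m
  have hn0 : 0 < n := by rw [hn]; positivity
  have hn1 : (1 : ℝ) ≤ (n : ℝ) := by exact_mod_cast hn0
  have hlog2 : Real.log 2 ≤ 0.7 := le_of_lt (lt_trans Real.log_two_lt_d9 (by norm_num))
  have hlog2' : (0:ℝ) ≤ Real.log 2 := Real.log_nonneg (by norm_num)
  have hlogn : Real.log n ≤ 3 + 3 * (D : ℝ) := by
    have hne : (n : ℝ) = 16 * 8 ^ D := by rw [hn]; push_cast; ring
    rw [hne, Real.log_mul (by norm_num) (by positivity), Real.log_pow]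
    have h16 : Real.log 16 = 4 * Real.log 2 := by
      rw [show (16:ℝ) = 2 ^ 4 by norm_num, Real.log_pow]; push_cast; ring
    have h8 : Real.log 8 = 3 * Real.log 2 := by
      rw [show (8:ℝ) = 2 ^ 3 by norm_num, Real.log_pow]; push_cast; ring
    rw [h16, h8]
    have hD0 : (0:ℝ) ≤ (D:ℝ) := Nat.cast_nonneg _
    have hmul : (D:ℝ) * Real.log 2 ≤ (D:ℝ) * 0.7 := mul_le_mul_of_nonneg_left hlog2 hD0
    nlinarith
  have hkey : C * Real.log (C * n) ≤ (m : ℝ) := by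
    have hlogC : Real.log (C * n) ≤ |Real.log C| + 3 + 3 * (D : ℝ) := by
      rw [Real.log_mul (ne_of_gt hC) (by positivity)]
      have h1 : Real.log C ≤ |Real.log C| := le_abs_self _
      linarith
    have hgoal : C * (|Real.log C| + 3 + 3 * (D : ℝ)) ≤ (m : ℝ) := by
      have hDr : (D : ℝ) ≤ 12 * (t : ℝ) ^ 3 := by
        calc (D : ℝ) ≤ ((12 * t ^ 3 : ℕ) : ℝ) := Nat.cast_le.mpr hDle
          _ = 12 * (t:ℝ)^3 := by push_cast; ring
      have hmr : (m : ℝ) = (t : ℝ) ^ 4 := by rw [hm]; push_cast; ring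
      have htr : (1:ℝ) ≤ (t : ℝ) := by exact_mod_cast ht1
      have ht3 : (1:ℝ) ≤ (t:ℝ)^3 := by
        calc (1:ℝ) = 1 ^ 3 := by norm_num
          _ ≤ (t:ℝ) ^ 3 := pow_le_pow_left₀ zero_le_one htr 3
      have habs : (0:ℝ) ≤ |Real.log C| := abs_nonneg _
      rw [hmr]
      have expand : (t:ℝ)^4 = (t:ℝ) * (t:ℝ)^3 := by ring
      rw [expand]
      nlinarith [mul_le_mul_of_nonneg_right ht (le_trans zero_le_one ht3),
        mul_nonneg (le_of_lt hC) habs,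
        mul_nonneg (mul_nonneg (le_of_lt hC) habs) (by linarith : (0:ℝ) ≤ (t:ℝ)^3 - 1),
        mul_le_mul_of_nonneg_left hDr (le_of_lt hC)]
    calc C * Real.log (C * n) ≤ C * (|Real.log C| + 3 + 3 * (D:ℝ)) :=
          mul_le_mul_of_nonneg_left hlogC (le_of_lt hC)
      _ ≤ (m : ℝ) := hgoal
  -- index bound
  have hindm : H.index ≤ m := by
    have : (H.index : ℝ) ≤ (m : ℝ) := le_trans hle hkey
    exact_mod_cast this
  -- finite quotient, coset action
  haveI hfin : Finite (FreeGroup (Fin k) ⧸ H) := by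
    apply Nat.finite_of_card_ne_zero
    rwa [Subgroup.index_eq_card] at hidx
  letI hft : Fintype (FreeGroup (Fin k) ⧸ H) := Fintype.ofFinite _
  letI : DecidableEq (FreeGroup (Fin k) ⧸ H) := Classical.decEq _
  set φ := MulAction.toPermHom (FreeGroup (Fin k)) (FreeGroup (Fin k) ⧸ H) with hφ
  set σ := φ (FreeGroup.of a) with hσ
  have hcard : Fintype.card (FreeGroup (Fin k) ⧸ H) ≤ m := by
    rw [← Nat.card_eq_fintype_card, ← Subgroup.index_eq_card]
    exact hindm
  have hord : orderOf σ ≤ m ^ s := hs ▸ BRM.perm_order_le σ m hcard hm1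
  have hord1 : 1 ≤ orderOf σ := orderOf_pos σ
  have heval : φ w = 1 := by
    rw [hw]
    refine BRM.eval_WL φ a b D 1 (orderOf σ) hord1 ?_ ?_
    · have h2 : orderOf σ ≤ 2 ^ D := le_trans hord hmpow
      omega
    · rw [← hσ]; exact pow_orderOf_eq_one σ
  have hker : w ∈ H.normalCore := by
    rw [Subgroup.normalCore_eq_ker]
    exact heval
  exact H.normalCore_le hker
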